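/- For any $R$-module $M$ and nonempty $T \subseteq Spec(M)$, the clique number of the Zariski topology-graph satisfies: $\omega(G(\tau_T)) = 2$ if and only if $\chi(G(\tau_T)) = 2$. Equivalently, $G(\tau_T)$ is bipartite if and only if $G(\tau_T)$ is triangle-free. -/

import Mathlib

open Submodule

section Defs
variable (R : Type*) [CommRing R] {M : Type*} [AddCommGroup M] [Module R M]

/-- `(N : M)`, the colon ideal of a submodule with the whole module. -/
def colonTop (N : Submodule R M) : Ideal R := N.colon ⊤

variable {R}

/-- A prime submodule. -/
def IsPrimeSubmodule (P : Submodule R M) : Prop :=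
  P ≠ ⊤ ∧ ∀ (r : R) (m : M), r • m ∈ P → r ∈ colonTop R P ∨ m ∈ P

/-- The prime spectrum of a module, as a set of submodules. -/
def specSet (R : Type*) [CommRing R] (M : Type*) [AddCommGroup M] [Module R M] :
    Set (Submodule R M) := {P | IsPrimeSubmodule P}

/-- `V(N)`. -/
def Vset (N : Submodule R M) : Set (Submodule R M) :=
  {P | IsPrimeSubmodule P ∧ colonTop R N ≤ colonTop R P}

/-- `V^*(N)`. -/
def VstarSet (N : Submodule R M) : Set (Submodule R M) :=
  {P | IsPrimeSubmodule P ∧ N ≤ P}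

/-- The product `NK = (N:M)(K:M)M` of two submodules. -/
def prodSub (N K : Submodule R M) : Submodule R M :=
  (colonTop R N * colonTop R K) • (⊤ : Submodule R M)

/-- The prime radical of a submodule. -/
def radicalSub (N : Submodule R M) : Submodule R M :=
  sInf {P | IsPrimeSubmodule P ∧ N ≤ P}

/-- Adjacency in the Zariski topology-graph `G(τ_T)`. -/
def ZAdj (T : Set (Submodule R M)) (N L : Submodule R M) : Prop :=
  N ≠ L ∧ N ≠ ⊤ ∧ L ≠ ⊤ ∧ Vset N ∪ Vset L = T ∧ Vset N ≠ T ∧ Vset L ≠ T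

/-- Vertices of the Zariski topology-graph `G(τ_T)`. -/
def ZVertex (T : Set (Submodule R M)) (N : Submodule R M) : Prop :=
  ∃ K, ZAdj T N K

/-- The Zariski topology-graph `G(τ_T)` as a simple graph on its vertex set. -/
def ZGraph (T : Set (Submodule R M)) : SimpleGraph {N : Submodule R M // ZVertex T N} where
  Adj a b := ZAdj T a.1 b.1
  symm := ⟨by
    rintro a b ⟨h1, h2, h3, h4, h5, h6⟩
    exact ⟨h1.symm, h3, h2, by rwa [Set.union_comm], h6, h5⟩⟩
  loopless := ⟨by rintro a ⟨h1, -⟩; exact h1 rfl⟩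

end Defs
section Extra
variable {R : Type*} [CommRing R] {M : Type*} [AddCommGroup M] [Module R M]

/-- Prime submodule of a submodule `W`, internal version (i.e. a prime submodule of the
module `W`). -/
def IsPrimeIn (W P : Submodule R M) : Prop :=
  P < W ∧ ∀ (r : R) (m : M), m ∈ W → r • m ∈ P → (∀ x ∈ W, r • x ∈ P) ∨ m ∈ P

/-- The prime radical of `N` computed inside the submodule `W`. -/
def radicalIn (W N : Submodule R M) : Submodule R M :=
  sInf {P | IsPrimeIn W P ∧ N ≤ P} ⊓ W

/-- Vertices of the graph `AG(M)^*`. -/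
def AGstarVertex (N : Submodule R M) : Prop :=
  N ≠ ⊤ ∧ colonTop R N ≠ Module.annihilator R M ∧
    ∃ K, K ≠ ⊤ ∧ colonTop R K ≠ Module.annihilator R M ∧ prodSub N K = ⊥

/-- Adjacency in the graph `AG(M)^*`. -/
def AGstarAdj (N L : Submodule R M) : Prop :=
  N ≠ L ∧ AGstarVertex N ∧ AGstarVertex L ∧ prodSub N L = ⊥

/-- The clique number of a graph, valued in `ℕ∞`. -/
noncomputable def cliqueNumE {V : Type*} (G : SimpleGraph V) : ℕ∞ :=
  ⨆ n ∈ {n : ℕ | ∃ s, G.IsNClique n s}, (n : ℕ∞)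

end Extra

namespace Stmt11Aux

open SimpleGraph

variable {R : Type*} [CommRing R] {M : Type*} [AddCommGroup M] [Module R M]

lemma vset_top : Vset (⊤ : Submodule R M) = ∅ := by
  ext P
  simp only [Vset, Set.mem_setOf_eq, Set.mem_empty_iff_false, iff_false, not_and]
  rintro ⟨hne, -⟩ hle
  apply hne
  have h1 : (1 : R) ∈ colonTop R (⊤ : Submodule R M) := by
    rw [colonTop, Submodule.mem_colon]; intro m _; exact Submodule.mem_top
  have h2 := hle h1
  rw [colonTop, Submodule.mem_colon] at h2
  ext m
  simp only [Submodule.mem_top, iff_true]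
  simpa using h2 m (Submodule.mem_top (R := R))

lemma colonTop_isPrime {P : Submodule R M} (hP : IsPrimeSubmodule P) :
    (colonTop R P).IsPrime := by
  constructor
  · intro h
    apply hP.1
    rw [Ideal.eq_top_iff_one, colonTop, Submodule.mem_colon] at h
    ext m
    simp only [Submodule.mem_top, iff_true]
    simpa using h m (Submodule.mem_top (R := R))
  · intro a b hab
    by_cases hb : b ∈ colonTop R P
    · exact Or.inr hb
    · left
      rw [colonTop, Submodule.mem_colon] at hb
      push_neg at hb
      obtain ⟨m, -, hm⟩ := hb
      have habm : a • (b • m) ∈ P := by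
        have h1 : (a * b) • m ∈ P := by
          rw [colonTop, Submodule.mem_colon] at hab
          exact hab m (Submodule.mem_top (R := R))
        rwa [mul_smul] at h1
      rcases hP.2 a (b • m) habm with h | h
      · exact h
      · exact absurd h hm

lemma colonTop_prod_le_iff {N K P : Submodule R M} :
    colonTop R (prodSub N K) ≤ colonTop R P ↔
      colonTop R N * colonTop R K ≤ colonTop R P := by
  constructor
  · intro h
    refine le_trans ?_ h
    intro r hr
    rw [colonTop, Submodule.mem_colon]
    intro m _
    exact Submodule.smul_mem_smul hr Submodule.mem_top
  · intro h
    have hle : prodSub N K ≤ P := by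
      rw [prodSub, Submodule.smul_le]
      intro r hr n _
      have := h hr
      rw [colonTop, Submodule.mem_colon] at this
      exact this n (Submodule.mem_top (R := R))
    intro r hr
    rw [colonTop, Submodule.mem_colon] at hr ⊢
    intro m hm
    exact hle (hr m hm)

lemma vset_prod (N K : Submodule R M) : Vset (prodSub N K) = Vset N ∪ Vset K := by
  ext P
  simp only [Vset, Set.mem_setOf_eq, Set.mem_union]
  constructor
  · rintro ⟨hP, hle⟩
    rcases ((colonTop_isPrime hP).mul_le).mp (colonTop_prod_le_iff.mp hle) with h | h
    · exact Or.inl ⟨hP, h⟩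
    · exact Or.inr ⟨hP, h⟩
  · rintro (⟨hP, h⟩ | ⟨hP, h⟩)
    · exact ⟨hP, colonTop_prod_le_iff.mpr (le_trans Ideal.mul_le_left h)⟩
    · exact ⟨hP, colonTop_prod_le_iff.mpr (le_trans Ideal.mul_le_right h)⟩

lemma zadj_of (T : Set (Submodule R M)) {a b : Submodule R M}
    (hab : Vset a ∪ Vset b = T) (ha : Vset a ≠ T) (hb : Vset b ≠ T) : ZAdj T a b := by
  have hne : a ≠ b := by rintro rfl; rw [Set.union_self] at hab; exact ha hab
  have hat : a ≠ ⊤ := by rintro rfl; rw [vset_top, Set.empty_union] at hab; exact hb hab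
  have hbt : b ≠ ⊤ := by rintro rfl; rw [vset_top, Set.union_empty] at hab; exact ha hab
  exact ⟨hne, hat, hbt, hab, ha, hb⟩

lemma not_cliqueFree_of_triple (T : Set (Submodule R M)) (x y z : Submodule R M)
    (hxy : Vset x ∪ Vset y = T) (hxz : Vset x ∪ Vset z = T) (hyz : Vset y ∪ Vset z = T)
    (hx : Vset x ≠ T) (hy : Vset y ≠ T) (hz : Vset z ≠ T) :
    ¬ (ZGraph T).CliqueFree 3 := by
  classical
  have axy := zadj_of T hxy hx hy
  have axz := zadj_of T hxz hx hz
  have ayz := zadj_of T hyz hy hz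
  have azx : ZAdj T z x := by
    obtain ⟨h1, h2, h3, h4, h5, h6⟩ := axz
    exact ⟨h1.symm, h3, h2, by rwa [Set.union_comm], h6, h5⟩
  intro hCF
  let X : {N : Submodule R M // ZVertex T N} := ⟨x, y, axy⟩
  let Y : {N : Submodule R M // ZVertex T N} := ⟨y, z, ayz⟩
  let Z : {N : Submodule R M // ZVertex T N} := ⟨z, x, azx⟩
  exact hCF {X, Y, Z} (SimpleGraph.is3Clique_triple_iff.mpr ⟨axy, axz, ayz⟩)

lemma colorable_of_cliqueFree {T : Set (Submodule R M)}
    (hCF : (ZGraph T).CliqueFree 3) : (ZGraph T).Colorable 2 := by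
  classical
  by_cases hE : ∃ N L : Submodule R M, ZAdj T N L
  · obtain ⟨N0, L0, h0⟩ := hE
    obtain ⟨-, -, -, hAB, hA, hB⟩ := h0
    have sA : Vset N0 ⊆ T := hAB ▸ Set.subset_union_left
    have sB : Vset L0 ⊆ T := hAB ▸ Set.subset_union_right
    refine ⟨SimpleGraph.Coloring.mk
      (fun v => if Vset v.1 ∪ Vset L0 = T then (0 : Fin 2) else 1) ?_⟩
    rintro ⟨K, hK⟩ ⟨K', hK'⟩ hadj heq
    obtain ⟨hne, -, -, hSS, hS, hS'⟩ := hadj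
    have sS : Vset K ⊆ T := hSS ▸ Set.subset_union_left
    have sS' : Vset K' ⊆ T := hSS ▸ Set.subset_union_right
    simp only at heq
    by_cases h1 : Vset K ∪ Vset L0 = T <;> by_cases h2 : Vset K' ∪ Vset L0 = T
    · exact not_cliqueFree_of_triple T K K' L0 hSS h1 h2 hS hS' hB hCF
    · simp only [h1, h2, if_true, if_false] at heq
      exact absurd heq (by decide)
    · simp only [h1, h2, if_true, if_false] at heq
      exact absurd heq (by decide)
    · -- both colored 1
      by_cases h4 : Vset K' ∪ Vset N0 = T
      · -- triangle N0, K', K·L0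
        refine not_cliqueFree_of_triple T N0 K' (prodSub K L0) ?_ ?_ ?_ hA hS'
          (by rwa [vset_prod]) hCF
        · rw [Set.union_comm]; exact h4
        · rw [vset_prod]
          refine Set.Subset.antisymm
            (Set.union_subset sA (Set.union_subset sS sB)) ?_
          rw [← hAB]
          exact Set.union_subset Set.subset_union_left
            (Set.subset_union_right.trans Set.subset_union_right)
        · rw [vset_prod]
          refine Set.Subset.antisymm
            (Set.union_subset sS' (Set.union_subset sS sB)) ?_
          rw [← hSS]
          exact Set.union_subset
            (Set.subset_union_left.trans Set.subset_union_right)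
            Set.subset_union_left
      · -- triangle K·L0, K'·L0, K'·N0
        refine not_cliqueFree_of_triple T (prodSub K L0) (prodSub K' L0) (prodSub K' N0)
          ?_ ?_ ?_ (by rwa [vset_prod]) (by rwa [vset_prod]) (by rwa [vset_prod]) hCF
        · rw [vset_prod, vset_prod]
          refine Set.Subset.antisymm
            (Set.union_subset (Set.union_subset sS sB) (Set.union_subset sS' sB)) ?_
          rw [← hSS]
          exact Set.union_subset
            (Set.subset_union_left.trans Set.subset_union_left)
            (Set.subset_union_left.trans Set.subset_union_right)
        · rw [vset_prod, vset_prod]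
          refine Set.Subset.antisymm
            (Set.union_subset (Set.union_subset sS sB) (Set.union_subset sS' sA)) ?_
          rw [← hSS]
          exact Set.union_subset
            (Set.subset_union_left.trans Set.subset_union_left)
            (Set.subset_union_left.trans Set.subset_union_right)
        · rw [vset_prod, vset_prod]
          refine Set.Subset.antisymm
            (Set.union_subset (Set.union_subset sS' sB) (Set.union_subset sS' sA)) ?_
          rw [← hAB]
          exact Set.union_subset
            (Set.subset_union_right.trans Set.subset_union_right)
            (Set.subset_union_right.trans Set.subset_union_left)
  · refine ⟨SimpleGraph.Coloring.mk (fun _ => 0) ?_⟩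
    intro v w hadj
    exact absurd ⟨v.1, w.1, hadj⟩ hE

lemma cliqueNumE_eq_two_iff {V : Type*} (G : SimpleGraph V) :
    cliqueNumE G = 2 ↔ (∃ v w, G.Adj v w) ∧ G.CliqueFree 3 := by
  classical
  constructor
  · intro h
    have hCF : G.CliqueFree 3 := by
      intro s hs
      have h3 : (3 : ℕ∞) ≤ cliqueNumE G :=
        le_biSup (fun n : ℕ => (n : ℕ∞)) (show (3:ℕ) ∈ _ from ⟨s, hs⟩)
      rw [h] at h3
      norm_num at h3
    refine ⟨?_, hCF⟩
    by_contra hne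
    push_neg at hne
    have hGbot : G = ⊥ := by
      ext a b
      simp only [SimpleGraph.bot_adj, iff_false]
      exact hne a b
    have hle : cliqueNumE G ≤ 1 := by
      refine iSup₂_le ?_
      rintro n ⟨s, hs⟩
      have hn1 : n ≤ 1 := by
        by_contra hgt
        push_neg at hgt
        exact SimpleGraph.cliqueFree_bot hgt s (hGbot ▸ hs)
      exact_mod_cast hn1
    rw [h] at hle
    norm_num at hle
  · rintro ⟨⟨v, w, hvw⟩, hCF⟩
    refine le_antisymm ?_ ?_
    · refine iSup₂_le ?_
      rintro n ⟨s, hs⟩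
      have hn2 : n ≤ 2 := by
        by_contra hgt
        push_neg at hgt
        exact (hCF.mono hgt) s hs
      exact_mod_cast hn2
    · have h2 : G.IsNClique 2 {v, w} := by
        constructor
        · intro a ha b hb hab
          simp only [Finset.coe_insert, Finset.coe_singleton, Set.mem_insert_iff,
            Set.mem_singleton_iff] at ha hb
          rcases ha with rfl | rfl <;> rcases hb with rfl | rfl
          · exact absurd rfl hab
          · exact hvw
          · exact hvw.symm
          · exact absurd rfl hab
        · rw [Finset.card_insert_of_notMem (by simp [hvw.ne]), Finset.card_singleton]
      exact le_biSup (fun n : ℕ => (n : ℕ∞)) (show (2:ℕ) ∈ _ from ⟨{v, w}, h2⟩)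

lemma chrom_eq_two_iff {V : Type*} (G : SimpleGraph V) :
    G.chromaticNumber = 2 ↔ (∃ v w, G.Adj v w) ∧ G.Colorable 2 := by
  constructor
  · intro h
    have hc2 : G.Colorable 2 := by
      rw [← SimpleGraph.chromaticNumber_le_iff_colorable, h]
      norm_num
    refine ⟨?_, hc2⟩
    by_contra hne
    push_neg at hne
    have hc1 : G.Colorable 1 :=
      ⟨SimpleGraph.Coloring.mk (fun _ => 0) (fun hadj => absurd hadj (hne _ _))⟩
    have := hc1.chromaticNumber_le
    rw [h] at this
    norm_num at this
  · rintro ⟨⟨v, w, hvw⟩, hc2⟩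
    have hle : G.chromaticNumber ≤ 2 := by
      have := hc2.chromaticNumber_le
      exact_mod_cast this
    have hge : (2 : ℕ∞) ≤ G.chromaticNumber := by
      by_contra hlt
      push_neg at hlt
      have h1 : G.chromaticNumber ≤ 1 :=
        Order.le_of_lt_add_one (by rwa [one_add_one_eq_two])
      rw [show (1 : ℕ∞) = ((1 : ℕ) : ℕ∞) by norm_cast,
        SimpleGraph.chromaticNumber_le_iff_colorable] at h1
      obtain ⟨c⟩ := h1
      exact c.valid hvw (Subsingleton.elim _ _)
    exact le_antisymm hle hge

end Stmt11Aux

/-- `ω(G(τ_T)) = 2 ↔ χ(G(τ_T)) = 2`; equivalently, `G(τ_T)` is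
bipartite iff it is triangle-free. -/
theorem stmt11 {R : Type*} [CommRing R] {M : Type*} [AddCommGroup M] [Module R M]
    (T : Set (Submodule R M)) (hT : T.Nonempty) :
    (cliqueNumE (ZGraph T) = 2 ↔ (ZGraph T).chromaticNumber = 2) ∧
      ((ZGraph T).Colorable 2 ↔ (ZGraph T).CliqueFree 3) := by
  classical
  have hmain : (ZGraph T).Colorable 2 ↔ (ZGraph T).CliqueFree 3 := by
    constructor
    · intro hc
      exact hc.cliqueFree (by norm_num)
    · exact Stmt11Aux.colorable_of_cliqueFree
  refine ⟨?_, hmain⟩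
  rw [Stmt11Aux.cliqueNumE_eq_two_iff, Stmt11Aux.chrom_eq_two_iff]
  constructor
  · rintro ⟨he, hCF⟩
    exact ⟨he, hmain.mpr hCF⟩
  · rintro ⟨he, hc⟩
    exact ⟨he, hmain.mp hc⟩
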